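/- arXiv:1909.09860 — 3 statements merged into one kernel-verified Lean document; each statement's English description precedes it below -/
import Mathlib

section
/- Let Λ ⊂ Z^d be finite, fix M ≥ 1 with (|a|∧|b|)·M^d > 2d(2M+1)^{d-1}·(|a|∨|b|) for an interval I = (a,b) with 0 ∉ [a,b]. Let v ∈ Λ with B(v;M) ⊆ Λ, and suppose J_f ∈ I for all edges f of B(v;M) and all edges from B(v;M) to its exterior boundary. Then the ground state σ of H_{Λ,J} satisfies J_f σ_f > 0 for at least (3/4)|B(v;M)*| edges f of B(v;M)*. -/
open Finset MeasureTheory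

/-- Vertices of `ℤ^d`. -/
abbrev Vd (d : ℕ) := Fin d → ℤ

/-- Nearest-neighbor adjacency on `ℤ^d`. -/
def adj {d : ℕ} (x y : Vd d) : Prop := (∑ i, |x i - y i|) = 1

instance {d : ℕ} : DecidableRel (adj (d := d)) := fun _ _ => by
  unfold adj; infer_instance

/-- The nearest neighbors of a vertex of `ℤ^d`. -/
def nbrs {d : ℕ} (x : Vd d) : Finset (Vd d) :=
  Finset.univ.biUnion fun i : Fin d =>
    {Function.update x i (x i + 1), Function.update x i (x i - 1)}

/-- The exterior vertex boundary of a finite set `Λ ⊆ ℤ^d`. -/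
def bdry {d : ℕ} (Λ : Finset (Vd d)) : Finset (Vd d) :=
  (Λ.biUnion nbrs) \ Λ

/-- `Λ` together with its exterior boundary. -/
def reg {d : ℕ} (Λ : Finset (Vd d)) : Finset (Vd d) := Λ ∪ bdry Λ

/-- The (oriented) edge set of `S`: each nearest-neighbor edge of `ℤ^d` with both endpoints
in `S` appears exactly once, oriented towards increasing coordinate sum. -/
def oEdges {d : ℕ} (S : Finset (Vd d)) : Finset (Vd d × Vd d) :=
  (S ×ˢ S).filter fun p => adj p.1 p.2 ∧ (∑ i, p.1 i) < (∑ i, p.2 i)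

/-- The coupling of the unordered edge `{u,v}`, read off from the oriented representative. -/
def cpl {d : ℕ} (J : Vd d × Vd d → ℝ) (u v : Vd d) : ℝ :=
  if (∑ i, u i) < (∑ i, v i) then J (u, v) else J (v, u)

/-- The Edwards-Anderson Hamiltonian on `Λ` (with couplings and spins on `Λ ∪ ∂Λ`). -/
def ham {d : ℕ} (Λ : Finset (Vd d)) (J : Vd d × Vd d → ℝ) (s : Vd d → ℝ) : ℝ :=
  -∑ p ∈ oEdges (reg Λ), J p * s p.1 * s p.2

/-- A spin configuration takes values `±1`. -/
def isSpin {d : ℕ} (s : Vd d → ℝ) : Prop := ∀ v, s v = 1 ∨ s v = -1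

/-- The edges of `Λ ∪ ∂Λ` having exactly one endpoint in `B` (the edge boundary `∂B`). -/
def bdryEdges {d : ℕ} (Λ : Finset (Vd d)) (B : Finset (Vd d)) : Finset (Vd d × Vd d) :=
  (oEdges (reg Λ)).filter fun p => (p.1 ∈ B ∧ p.2 ∉ B) ∨ (p.2 ∈ B ∧ p.1 ∉ B)

/-- The `ℓ∞`-ball (box of sidelength `2M+1`) around `v` in `ℤ^d`. -/
noncomputable def ballM {d : ℕ} (v : Vd d) (M : ℕ) : Finset (Vd d) :=
  Fintype.piFinset fun i => Finset.Icc (v i - M) (v i + M)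

namespace St8

lemma sum_pos_eq_one {d : ℕ} (f : Fin d → ℤ) (h0 : ∀ i, 0 ≤ f i) (h1 : ∑ i, f i = 1) :
    ∃ i, f i = 1 ∧ ∀ j, j ≠ i → f j = 0 := by
  have hne : ∃ i, f i ≠ 0 := by
    by_contra h
    push_neg at h
    simp [h] at h1
  obtain ⟨i, hi⟩ := hne
  have h1le : 1 ≤ f i := lt_of_le_of_ne (h0 i) (Ne.symm hi)
  have hsum : f i + ∑ j ∈ Finset.univ.erase i, f j = 1 := by
    rw [Finset.add_sum_erase _ f (Finset.mem_univ i)]; exact h1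
  have hz : ∑ j ∈ Finset.univ.erase i, f j = 0 := by
    have : 0 ≤ ∑ j ∈ Finset.univ.erase i, f j :=
      Finset.sum_nonneg fun j _ => h0 j
    omega
  refine ⟨i, by omega, fun j hj => ?_⟩
  exact (Finset.sum_eq_zero_iff_of_nonneg (fun j _ => h0 j)).mp hz j
    (Finset.mem_erase.mpr ⟨hj, Finset.mem_univ j⟩)

lemma adj_struct {d : ℕ} {x y : Vd d} (h : adj x y) :
    ∃ i, (∀ j, j ≠ i → x j = y j) ∧ (y i = x i + 1 ∨ y i = x i - 1) := by
  obtain ⟨i, hi1, hi0⟩ := sum_pos_eq_one (fun i => |x i - y i|) (fun i => abs_nonneg _) h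
  refine ⟨i, fun j hj => ?_, ?_⟩
  · have := hi0 j hj; rw [abs_eq_zero] at this; omega
  · rw [abs_eq (by norm_num : (0:ℤ) ≤ 1)] at hi1
    omega

lemma adj_symm {d : ℕ} {x y : Vd d} (h : adj x y) : adj y x := by
  unfold adj at *
  rw [← h]
  exact Finset.sum_congr rfl fun i _ => abs_sub_comm _ _

lemma sum_eq_of_agree {d : ℕ} {x y : Vd d} {i : Fin d} (h : ∀ j, j ≠ i → x j = y j) :
    ∑ j, y j = (∑ j, x j) + (y i - x i) := by
  have : ∑ j, y j - ∑ j, x j = ∑ j, (y j - x j) := by rw [Finset.sum_sub_distrib]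
  have h2 : ∑ j, (y j - x j) = y i - x i := by
    rw [Finset.sum_eq_single i]
    · intro j _ hj; rw [h j hj]; ring
    · intro hj; exact absurd (Finset.mem_univ i) hj
  omega

lemma adj_parity {d : ℕ} {x y : Vd d} (h : adj x y) : Odd ((∑ j, x j) + ∑ j, y j) := by
  obtain ⟨i, hagree, hpm⟩ := adj_struct h
  have := sum_eq_of_agree hagree
  rcases hpm with h1 | h1 <;> rw [h1] at this
  · exact ⟨∑ j, x j, by omega⟩
  · exact ⟨(∑ j, x j) - 1, by omega⟩

lemma mem_oEdges {d : ℕ} {S : Finset (Vd d)} {p : Vd d × Vd d} :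
    p ∈ oEdges S ↔ p.1 ∈ S ∧ p.2 ∈ S ∧ adj p.1 p.2 ∧ (∑ i, p.1 i) < (∑ i, p.2 i) := by
  unfold oEdges
  simp [Finset.mem_filter, Finset.mem_product, and_assoc]

lemma oEdges_struct {d : ℕ} {S : Finset (Vd d)} {p : Vd d × Vd d} (h : p ∈ oEdges S) :
    ∃ i, (∀ j, j ≠ i → p.1 j = p.2 j) ∧ p.2 i = p.1 i + 1 := by
  obtain ⟨_, _, hadj, hlt⟩ := mem_oEdges.mp h
  obtain ⟨i, hagree, hpm⟩ := adj_struct hadj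
  refine ⟨i, hagree, ?_⟩
  have := sum_eq_of_agree hagree
  rcases hpm with h1 | h1
  · exact h1
  · omega

lemma adj_update_add {d : ℕ} (u : Vd d) (i : Fin d) :
    adj u (Function.update u i (u i + 1)) := by
  unfold adj
  rw [Finset.sum_eq_single i]
  · simp
  · intro j _ hj; simp [Function.update_of_ne hj]
  · intro hj; exact absurd (Finset.mem_univ i) hj

lemma mem_ballM {d : ℕ} {v x : Vd d} {M : ℕ} :
    x ∈ ballM v M ↔ ∀ i, v i - M ≤ x i ∧ x i ≤ v i + M := by
  unfold ballM
  simp [Fintype.mem_piFinset, Finset.mem_Icc]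

/-- lower bound on the number of edges of the ball -/
lemma card_ball_edges {d : ℕ} (hd : 0 < d) (v : Vd d) (M : ℕ) (hM : 1 ≤ M) :
    2 * M ^ d ≤ (oEdges (ballM v M)).card := by
  set i₀ : Fin d := ⟨0, hd⟩
  set S₀ : Finset (Vd d) := Fintype.piFinset fun j =>
    if j = i₀ then Finset.Icc (v j - M) (v j + M - 1) else Finset.Icc (v j - M) (v j + M)
    with hS₀
  have hinj : ∀ u ∈ S₀, (u, Function.update u i₀ (u i₀ + 1)) ∈ oEdges (ballM v M) := by
    intro u hu
    rw [Fintype.mem_piFinset] at hu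
    have hu' : ∀ j, v j - M ≤ u j ∧ (if j = i₀ then u j ≤ v j + M - 1 else u j ≤ v j + M) := by
      intro j
      have := hu j
      by_cases hj : j = i₀ <;> simp [hj, Finset.mem_Icc] at this ⊢ <;> omega
    rw [mem_oEdges]
    dsimp only
    refine ⟨?_, ?_, adj_update_add u i₀, ?_⟩
    · rw [mem_ballM]
      intro j
      have := hu' j
      by_cases hj : j = i₀
      · rw [if_pos hj] at this; omega
      · rw [if_neg hj] at this; omega
    · rw [mem_ballM]
      intro j
      have := hu' j
      by_cases hj : j = i₀
      · rw [hj] at this ⊢; rw [if_pos rfl] at this; rw [Function.update_self]; omega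
      · rw [Function.update_of_ne hj]; rw [if_neg hj] at this; omega
    · have : ∑ j, Function.update u i₀ (u i₀ + 1) j
          = (∑ j, u j) + (Function.update u i₀ (u i₀ + 1) i₀ - u i₀) :=
        sum_eq_of_agree (fun j hj => (Function.update_of_ne hj _ _).symm)
      simp at this
      omega
  have hcard : S₀.card ≤ (oEdges (ballM v M)).card := by
    apply Finset.card_le_card_of_injOn (fun u => (u, Function.update u i₀ (u i₀ + 1))) hinj
    intro u _ w _ h
    exact congrArg Prod.fst h
  have hS₀card : S₀.card = 2 * M * (2 * M + 1) ^ (d - 1) := by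
    rw [hS₀, Fintype.card_piFinset]
    rw [← Finset.mul_prod_erase _ _ (Finset.mem_univ i₀)]
    have h1 : (Finset.Icc (v i₀ - M) (v i₀ + M - 1)).card = 2 * M := by
      rw [Int.card_Icc]; omega
    have h2 : ∀ j ∈ Finset.univ.erase i₀,
        ((if j = i₀ then Finset.Icc (v j - M) (v j + M - 1)
          else Finset.Icc (v j - M) (v j + M)).card) = 2 * M + 1 := by
      intro j hj
      rw [if_neg (Finset.mem_erase.mp hj).1, Int.card_Icc]
      omega
    rw [if_pos rfl, h1, Finset.prod_congr rfl h2, Finset.prod_const,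
      Finset.card_erase_of_mem (Finset.mem_univ i₀)]
    simp
  calc 2 * M ^ d = 2 * M * M ^ (d - 1) := by
        rw [mul_assoc, ← pow_succ']
        congr 2
        omega
    _ ≤ 2 * M * (2 * M + 1) ^ (d - 1) := by
        apply Nat.mul_le_mul_left
        exact Nat.pow_le_pow_left (by omega) _
    _ = S₀.card := hS₀card.symm
    _ ≤ _ := hcard

noncomputable def face {d : ℕ} (v : Vd d) (M : ℕ) (i : Fin d) (dir : Bool) : Finset (Vd d) :=
  Fintype.piFinset fun j =>
    if j = i then {if dir then v i + M else v i - M} else Finset.Icc (v j - M) (v j + M)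

def outEdge {d : ℕ} (i : Fin d) (dir : Bool) (u : Vd d) : Vd d × Vd d :=
  if dir then (u, Function.update u i (u i + 1)) else (Function.update u i (u i - 1), u)

lemma card_face {d : ℕ} (v : Vd d) (M : ℕ) (i : Fin d) (dir : Bool) :
    (face v M i dir).card = (2 * M + 1) ^ (d - 1) := by
  unfold face
  rw [Fintype.card_piFinset, ← Finset.mul_prod_erase _ _ (Finset.mem_univ i), if_pos rfl]
  have h2 : ∀ j ∈ Finset.univ.erase i,
      ((if j = i then ({if dir then v i + M else v i - M} : Finset ℤ)
        else Finset.Icc (v j - M) (v j + M)).card) = 2 * M + 1 := by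
    intro j hj
    rw [if_neg (Finset.mem_erase.mp hj).1, Int.card_Icc]
    omega
  rw [Finset.prod_congr rfl h2, Finset.prod_const,
    Finset.card_erase_of_mem (Finset.mem_univ i)]
  simp

lemma card_bdry_edges {d : ℕ} (Λ : Finset (Vd d)) (v : Vd d) (M : ℕ) :
    (bdryEdges Λ (ballM v M)).card ≤ 2 * d * (2 * M + 1) ^ (d - 1) := by
  have hsub : bdryEdges Λ (ballM v M) ⊆
      (Finset.univ : Finset (Fin d × Bool)).biUnion
        (fun q => (face v M q.1 q.2).image (outEdge q.1 q.2)) := by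
    intro p hp
    rw [bdryEdges, Finset.mem_filter] at hp
    obtain ⟨hpE, hside⟩ := hp
    obtain ⟨i, hagree, hstep⟩ := oEdges_struct hpE
    rw [Finset.mem_biUnion]
    rcases hside with ⟨h1, h2⟩ | ⟨h2, h1⟩
    · refine ⟨(i, true), Finset.mem_univ _, ?_⟩
      rw [Finset.mem_image]
      have h1' := mem_ballM.mp h1
      have htop : p.1 i = v i + M := by
        by_contra hc
        apply h2
        rw [mem_ballM]
        intro j
        by_cases hj : j = i
        · rw [hj]
          have := h1' i
          omega
        · rw [← hagree j hj]; exact h1' j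
      refine ⟨p.1, ?_, ?_⟩
      · rw [face, Fintype.mem_piFinset]
        intro j
        by_cases hj : j = i
        · rw [hj, if_pos rfl]
          simpa using htop
        · rw [if_neg hj, Finset.mem_Icc]
          exact h1' j
      · rw [outEdge, if_pos rfl]
        ext j
        · rfl
        · dsimp only
          by_cases hj : j = i
          · rw [hj, Function.update_self, ← hstep]
          · rw [Function.update_of_ne hj, hagree j hj]
    · refine ⟨(i, false), Finset.mem_univ _, ?_⟩
      rw [Finset.mem_image]
      have h2' := mem_ballM.mp h2
      have hbot : p.2 i = v i - M := by
        by_contra hc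
        apply h1
        rw [mem_ballM]
        intro j
        by_cases hj : j = i
        · rw [hj]
          have := h2' i
          omega
        · rw [hagree j hj]; exact h2' j
      refine ⟨p.2, ?_, ?_⟩
      · rw [face, Fintype.mem_piFinset]
        intro j
        by_cases hj : j = i
        · rw [hj, if_pos rfl]
          simpa using hbot
        · rw [if_neg hj, Finset.mem_Icc]
          exact h2' j
      · rw [outEdge, if_neg (by simp)]
        ext j
        · dsimp only
          by_cases hj : j = i
          · rw [hj, Function.update_self]
            omega
          · rw [Function.update_of_ne hj, hagree j hj]
        · rfl
  calc (bdryEdges Λ (ballM v M)).card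
      ≤ _ := Finset.card_le_card hsub
    _ ≤ ∑ q : Fin d × Bool, ((face v M q.1 q.2).image (outEdge q.1 q.2)).card :=
        Finset.card_biUnion_le
    _ ≤ ∑ q : Fin d × Bool, (2 * M + 1) ^ (d - 1) := by
        apply Finset.sum_le_sum
        intro q _
        calc ((face v M q.1 q.2).image (outEdge q.1 q.2)).card
            ≤ (face v M q.1 q.2).card := Finset.card_image_le
          _ = (2 * M + 1) ^ (d - 1) := card_face v M q.1 q.2
    _ = 2 * d * (2 * M + 1) ^ (d - 1) := by
        rw [Finset.sum_const, Finset.card_univ]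
        simp [Fintype.card_prod, mul_comm, mul_assoc]

lemma coupling_facts {a b : ℝ} (hab : a < b) (h0 : (0 : ℝ) ∉ Set.Icc a b) {J : ℝ}
    (hJ : J ∈ Set.Ioo a b) :
    J * (if 0 < a then (1:ℝ) else -1) = |J| ∧ min |a| |b| < |J| ∧ |J| < max |a| |b| := by
  rw [Set.mem_Icc] at h0
  push_neg at h0
  obtain ⟨hJ1, hJ2⟩ := hJ
  by_cases ha : 0 < a
  · have hJpos : 0 < J := lt_trans ha hJ1
    rw [if_pos ha, mul_one, abs_of_pos hJpos, abs_of_pos ha, abs_of_pos (lt_trans ha hab)]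
    refine ⟨rfl, ?_, ?_⟩
    · rw [min_eq_left (le_of_lt hab)]; exact hJ1
    · rw [max_eq_right (le_of_lt hab)]; exact hJ2
  · have hb : b < 0 := h0 (le_of_not_gt ha)
    have hJneg : J < 0 := lt_trans hJ2 hb
    have ha' : a < 0 := lt_trans hab hb
    rw [if_neg ha, abs_of_neg hJneg, abs_of_neg ha', abs_of_neg hb]
    refine ⟨by ring, ?_, ?_⟩
    · rw [min_eq_right (by linarith : -b ≤ -a)]; linarith
    · rw [max_eq_left (by linarith : -b ≤ -a)]; linarith

noncomputable def tcfg {d : ℕ} (a : ℝ) (x : Vd d) : ℝ :=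
  if 0 < a then 1 else if Even (∑ i, x i) then 1 else -1

lemma tcfg_spin {d : ℕ} (a : ℝ) (x : Vd d) : tcfg a x = 1 ∨ tcfg a x = -1 := by
  unfold tcfg; split_ifs <;> simp

lemma tcfg_mul {d : ℕ} (a : ℝ) {x y : Vd d} (h : adj x y) :
    tcfg a x * tcfg a y = (if 0 < a then (1:ℝ) else -1) := by
  unfold tcfg
  by_cases ha : 0 < a
  · simp [ha]
  · simp only [if_neg ha]
    have hodd := adj_parity h
    rcases Int.even_or_odd (∑ j, x j) with hx | hx
    · have hy : ¬ Even (∑ j, y j) := by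
        rcases hodd with ⟨k, hk⟩; rcases hx with ⟨l, hl⟩
        rintro ⟨n, hn⟩; omega
      rw [if_pos hx, if_neg hy]; ring
    · have hx' : ¬ Even (∑ j, x j) := by
        rcases hx with ⟨k, hk⟩; rintro ⟨n, hn⟩; omega
      have hy : Even (∑ j, y j) := by
        rcases hodd with ⟨k, hk⟩; rcases hx with ⟨l, hl⟩
        exact ⟨k - l, by omega⟩
      rw [if_neg hx', if_pos hy]; ring

noncomputable def scfg {d : ℕ} (a : ℝ) (B : Finset (Vd d)) (σ : Vd d → ℝ) (η : ℝ) (x : Vd d) : ℝ :=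
  if x ∈ B then η * tcfg a x else σ x

lemma scfg_mem {d : ℕ} (a : ℝ) (B : Finset (Vd d)) (σ : Vd d → ℝ) (η : ℝ) {x : Vd d}
    (h : x ∈ B) : scfg a B σ η x = η * tcfg a x := if_pos h

lemma scfg_not_mem {d : ℕ} (a : ℝ) (B : Finset (Vd d)) (σ : Vd d → ℝ) (η : ℝ) {x : Vd d}
    (h : x ∉ B) : scfg a B σ η x = σ x := if_neg h

lemma scfg_spin {d : ℕ} (a : ℝ) (B : Finset (Vd d)) {σ : Vd d → ℝ} (hσ : isSpin σ)
    {η : ℝ} (hη : η = 1 ∨ η = -1) : isSpin (scfg a B σ η) := by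
  intro x
  unfold scfg
  by_cases hx : x ∈ B
  · rw [if_pos hx]
    rcases hη with h | h <;> rcases tcfg_spin a x with h' | h' <;> rw [h, h'] <;> norm_num
  · rw [if_neg hx]; exact hσ x

lemma min_abs_pos {a b : ℝ} (hab : a < b) (h0 : (0 : ℝ) ∉ Set.Icc a b) :
    0 < min |a| |b| := by
  rw [Set.mem_Icc] at h0
  push_neg at h0
  by_cases ha : 0 < a
  · rw [abs_of_pos ha, abs_of_pos (lt_trans ha hab)]
    simp [lt_min_iff]
    constructor <;> linarith
  · have hb : b < 0 := h0 (le_of_not_gt ha)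
    have ha' : a < 0 := lt_trans hab hb
    rw [abs_of_neg ha', abs_of_neg hb]
    simp [lt_min_iff]
    constructor <;> linarith

end St8

open St8

/-- If all couplings of the box `B(v;M)` and of the edges leaving it lie
in an interval `I = (a,b)` with `0 ∉ [a,b]`, and
`(|a| ∧ |b|) M^d > 2d(2M+1)^{d-1} (|a| ∨ |b|)`, then the ground state satisfies at least
three quarters of the bonds of `B(v;M)*`. -/
theorem stmt8 {d : ℕ} (hd : 0 < d) (Λ : Finset (Vd d)) (J : Vd d × Vd d → ℝ)
    (a b : ℝ) (hab : a < b) (h0 : (0 : ℝ) ∉ Set.Icc a b)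
    (M : ℕ) (hM : 1 ≤ M)
    (hMd : 2 * d * (2 * (M : ℝ) + 1) ^ (d - 1) * max |a| |b| <
      min |a| |b| * (M : ℝ) ^ d)
    (v : Vd d) (hball : ballM v M ⊆ Λ)
    (hJ : ∀ u ∈ ballM v M, ∀ w, adj u w → cpl J u w ∈ Set.Ioo a b)
    (σ : Vd d → ℝ) (hσ : isSpin σ)
    (hmin : ∀ s, isSpin s → (∀ u, u ∉ Λ → s u = σ u) → ham Λ J σ ≤ ham Λ J s) :
    (3 / 4 : ℝ) * (oEdges (ballM v M)).card ≤
      (((oEdges (ballM v M)).filter fun p => 0 < J p * σ p.1 * σ p.2).card : ℝ) := by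
  classical
  have hm : 0 < min |a| |b| := min_abs_pos hab h0
  have hMx0 : (0:ℝ) ≤ max |a| |b| := le_trans (abs_nonneg a) (le_max_left _ _)
  have hσabs : ∀ x, |σ x| = 1 := fun x => by rcases hσ x with h | h <;> rw [h] <;> norm_num
  have hσσabs : ∀ p : Vd d × Vd d, |J p * σ p.1 * σ p.2| = |J p| := by
    intro p
    rw [abs_mul, abs_mul, hσabs, hσabs, mul_one, mul_one]
  -- couplings of the ball and its boundary lie in (a,b)
  have hJin : ∀ p ∈ oEdges (ballM v M), J p ∈ Set.Ioo a b := by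
    intro p hp
    obtain ⟨hp1, hp2, hadj, hlt⟩ := mem_oEdges.mp hp
    have := hJ p.1 hp1 p.2 hadj
    rwa [cpl, if_pos hlt, Prod.mk.eta] at this
  have hJbd : ∀ p ∈ bdryEdges Λ (ballM v M), J p ∈ Set.Ioo a b := by
    intro p hp
    rw [bdryEdges, Finset.mem_filter] at hp
    obtain ⟨hpR, hside⟩ := hp
    obtain ⟨hq1, hq2, hadj, hlt⟩ := mem_oEdges.mp hpR
    rcases hside with ⟨h1, _⟩ | ⟨h2, _⟩
    · have := hJ p.1 h1 p.2 hadj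
      rwa [cpl, if_pos hlt, Prod.mk.eta] at this
    · have := hJ p.2 h2 p.1 (adj_symm hadj)
      rwa [cpl, if_neg (by omega), Prod.mk.eta] at this
  -- the comparison configurations
  have hham : ∀ η : ℝ, (η = 1 ∨ η = -1) →
      ∑ p ∈ oEdges (reg Λ), J p * scfg a (ballM v M) σ η p.1 * scfg a (ballM v M) σ η p.2
        ≤ ∑ p ∈ oEdges (reg Λ), J p * σ p.1 * σ p.2 := by
    intro η hη
    have hout : ∀ u, u ∉ Λ → scfg a (ballM v M) σ η u = σ u := fun u hu =>
      scfg_not_mem a _ σ η (fun hc => hu (hball hc))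
    have := hmin _ (scfg_spin a (ballM v M) hσ hη) hout
    rw [ham, ham] at this
    linarith
  -- membership helpers
  have hEinR : oEdges (ballM v M) ⊆ oEdges (reg Λ) := by
    intro p hp
    obtain ⟨hp1, hp2, hadj, hlt⟩ := mem_oEdges.mp hp
    exact mem_oEdges.mpr ⟨Finset.mem_union_left _ (hball hp1),
      Finset.mem_union_left _ (hball hp2), hadj, hlt⟩
  have hEbdR : bdryEdges Λ (ballM v M) ⊆ oEdges (reg Λ) := Finset.filter_subset _ _
  have hdisj : Disjoint (oEdges (ballM v M)) (bdryEdges Λ (ballM v M)) := by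
    rw [Finset.disjoint_left]
    intro p hp hp'
    obtain ⟨hp1, hp2, _, _⟩ := mem_oEdges.mp hp
    rw [bdryEdges, Finset.mem_filter] at hp'
    rcases hp'.2 with ⟨_, h⟩ | ⟨_, h⟩
    · exact h hp2
    · exact h hp1
  -- the combined energy comparison
  set G : Vd d × Vd d → ℝ := fun p =>
    (J p * scfg a (ballM v M) σ 1 p.1 * scfg a (ballM v M) σ 1 p.2)
    + (J p * scfg a (ballM v M) σ (-1) p.1 * scfg a (ballM v M) σ (-1) p.2)
    - 2 * (J p * σ p.1 * σ p.2) with hGdef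
  have hGsum : ∑ p ∈ oEdges (reg Λ), G p ≤ 0 := by
    have h1 := hham 1 (Or.inl rfl)
    have h2 := hham (-1) (Or.inr rfl)
    rw [hGdef]
    rw [Finset.sum_sub_distrib, Finset.sum_add_distrib, ← Finset.mul_sum]
    linarith
  have hGout : ∀ p ∈ oEdges (reg Λ), p ∉ oEdges (ballM v M) →
      p ∉ bdryEdges Λ (ballM v M) → G p = 0 := by
    intro p hpR hnin hnbd
    obtain ⟨hq1, hq2, hadj, hlt⟩ := mem_oEdges.mp hpR
    have hno : p.1 ∉ ballM v M ∧ p.2 ∉ ballM v M := by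
      by_cases h1 : p.1 ∈ ballM v M <;> by_cases h2 : p.2 ∈ ballM v M
      · exact absurd (mem_oEdges.mpr ⟨h1, h2, hadj, hlt⟩) hnin
      · exact absurd (Finset.mem_filter.mpr ⟨hpR, Or.inl ⟨h1, h2⟩⟩) hnbd
      · exact absurd (Finset.mem_filter.mpr ⟨hpR, Or.inr ⟨h2, h1⟩⟩) hnbd
      · exact ⟨h1, h2⟩
    rw [hGdef]
    dsimp only
    rw [scfg_not_mem a _ σ 1 hno.1, scfg_not_mem a _ σ 1 hno.2,
      scfg_not_mem a _ σ (-1) hno.1, scfg_not_mem a _ σ (-1) hno.2]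
    ring
  have hsplit : ∑ p ∈ oEdges (reg Λ), G p =
      ∑ p ∈ oEdges (ballM v M), G p + ∑ p ∈ bdryEdges Λ (ballM v M), G p := by
    have hsub : oEdges (ballM v M) ∪ bdryEdges Λ (ballM v M) ⊆ oEdges (reg Λ) :=
      Finset.union_subset hEinR hEbdR
    rw [← Finset.sum_sdiff hsub, Finset.sum_union hdisj]
    have hz : ∑ p ∈ oEdges (reg Λ) \ (oEdges (ballM v M) ∪ bdryEdges Λ (ballM v M)), G p = 0 := by
      apply Finset.sum_eq_zero
      intro p hp
      rw [Finset.mem_sdiff, Finset.mem_union] at hp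
      exact hGout p hp.1 (fun h => hp.2 (Or.inl h)) (fun h => hp.2 (Or.inr h))
    rw [hz]
    ring
  -- pointwise values of G
  have hGin : ∀ p ∈ oEdges (ballM v M), G p = 2 * |J p| - 2 * (J p * σ p.1 * σ p.2) := by
    intro p hp
    obtain ⟨hp1, hp2, hadj, hlt⟩ := mem_oEdges.mp hp
    rw [hGdef]
    dsimp only
    rw [scfg_mem a _ σ 1 hp1, scfg_mem a _ σ 1 hp2,
      scfg_mem a _ σ (-1) hp1, scfg_mem a _ σ (-1) hp2]
    have hr : J p * (1 * tcfg a p.1) * (1 * tcfg a p.2)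
        + J p * (-1 * tcfg a p.1) * (-1 * tcfg a p.2)
        = 2 * (J p * (tcfg a p.1 * tcfg a p.2)) := by ring
    rw [hr, tcfg_mul a hadj, (coupling_facts hab h0 (hJin p hp)).1]
  have hGbd : ∀ p ∈ bdryEdges Λ (ballM v M), G p = -(2 * (J p * σ p.1 * σ p.2)) := by
    intro p hp
    rw [bdryEdges, Finset.mem_filter] at hp
    rw [hGdef]
    dsimp only
    rcases hp.2 with ⟨h1, h2⟩ | ⟨h2, h1⟩
    · rw [scfg_mem a _ σ 1 h1, scfg_not_mem a _ σ 1 h2,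
        scfg_mem a _ σ (-1) h1, scfg_not_mem a _ σ (-1) h2]
      ring
    · rw [scfg_mem a _ σ 1 h2, scfg_not_mem a _ σ 1 h1,
        scfg_mem a _ σ (-1) h2, scfg_not_mem a _ σ (-1) h1]
      ring
  -- the key inequality
  have hkey : ∑ p ∈ oEdges (ballM v M), (2 * |J p| - 2 * (J p * σ p.1 * σ p.2))
      ≤ 2 * max |a| |b| * ((bdryEdges Λ (ballM v M)).card : ℝ) := by
    have h1 : ∑ p ∈ oEdges (ballM v M), (2 * |J p| - 2 * (J p * σ p.1 * σ p.2))
        = ∑ p ∈ oEdges (ballM v M), G p := (Finset.sum_congr rfl hGin).symm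
    have h2 : ∑ p ∈ bdryEdges Λ (ballM v M), G p
        ≥ ((bdryEdges Λ (ballM v M)).card : ℝ) * (-(2 * max |a| |b|)) := by
      have := Finset.card_nsmul_le_sum (bdryEdges Λ (ballM v M)) G (-(2 * max |a| |b|)) ?_
      · rwa [nsmul_eq_mul] at this
      · intro p hp
        rw [hGbd p hp]
        have habs := hσσabs p
        have hle : J p * σ p.1 * σ p.2 ≤ |J p| := by
          rw [← habs]; exact le_abs_self _
        have hlt : |J p| < max |a| |b| := (coupling_facts hab h0 (hJbd p hp)).2.2
        linarith
    have h3 := hGsum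
    rw [hsplit] at h3
    rw [h1]
    linarith
  -- lower bound via unsatisfied edges
  set U := ((oEdges (ballM v M)).filter fun p => ¬ 0 < J p * σ p.1 * σ p.2).card with hUdef
  have hterm_nonneg : ∀ p ∈ oEdges (ballM v M),
      0 ≤ 2 * |J p| - 2 * (J p * σ p.1 * σ p.2) := by
    intro p hp
    have hle : J p * σ p.1 * σ p.2 ≤ |J p| := by
      rw [← hσσabs p]; exact le_abs_self _
    linarith
  have hUbound : 4 * min |a| |b| * (U : ℝ)
      ≤ ∑ p ∈ oEdges (ballM v M), (2 * |J p| - 2 * (J p * σ p.1 * σ p.2)) := by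
    have hsub := Finset.filter_subset
      (fun p => ¬ 0 < J p * σ p.1 * σ p.2) (oEdges (ballM v M))
    have h1 : ∑ p ∈ (oEdges (ballM v M)).filter (fun p => ¬ 0 < J p * σ p.1 * σ p.2),
        (2 * |J p| - 2 * (J p * σ p.1 * σ p.2))
        ≤ ∑ p ∈ oEdges (ballM v M), (2 * |J p| - 2 * (J p * σ p.1 * σ p.2)) :=
      Finset.sum_le_sum_of_subset_of_nonneg hsub (fun p hp _ => hterm_nonneg p hp)
    have h2 : (U : ℝ) * (4 * min |a| |b|)
        ≤ ∑ p ∈ (oEdges (ballM v M)).filter (fun p => ¬ 0 < J p * σ p.1 * σ p.2),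
          (2 * |J p| - 2 * (J p * σ p.1 * σ p.2)) := by
      have := Finset.card_nsmul_le_sum
        ((oEdges (ballM v M)).filter (fun p => ¬ 0 < J p * σ p.1 * σ p.2))
        (fun p => 2 * |J p| - 2 * (J p * σ p.1 * σ p.2)) (4 * min |a| |b|) ?_
      · rwa [nsmul_eq_mul] at this
      · intro p hp
        rw [Finset.mem_filter] at hp
        have hple := hp.2
        push_neg at hple
        have habs := hσσabs p
        have hneg : J p * σ p.1 * σ p.2 = -|J p| := by
          rw [← habs, abs_of_nonpos hple]
          ring
        have hmlt : min |a| |b| < |J p| := (coupling_facts hab h0 (hJin p hp.1)).2.1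
        rw [hneg]
        linarith
    linarith
  -- counting
  have hEbdcard : ((bdryEdges Λ (ballM v M)).card : ℝ)
      ≤ 2 * d * (2 * (M : ℝ) + 1) ^ (d - 1) := by
    have := card_bdry_edges Λ v M
    have := (Nat.cast_le (α := ℝ)).mpr this
    push_cast at this
    convert this using 2 <;> push_cast <;> ring
  have hEincard : 2 * (M : ℝ) ^ d ≤ ((oEdges (ballM v M)).card : ℝ) := by
    have := card_ball_edges hd v M hM
    have := (Nat.cast_le (α := ℝ)).mpr this
    push_cast at this
    linarith
  -- put everything together
  have hchain : 4 * min |a| |b| * (U : ℝ) < min |a| |b| * ((oEdges (ballM v M)).card : ℝ) := by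
    calc 4 * min |a| |b| * (U : ℝ)
        ≤ 2 * max |a| |b| * ((bdryEdges Λ (ballM v M)).card : ℝ) := le_trans hUbound hkey
      _ ≤ 2 * max |a| |b| * (2 * d * (2 * (M : ℝ) + 1) ^ (d - 1)) := by
          apply mul_le_mul_of_nonneg_left hEbdcard
          linarith
      _ = 2 * (2 * d * (2 * (M : ℝ) + 1) ^ (d - 1) * max |a| |b|) := by ring
      _ < 2 * (min |a| |b| * (M : ℝ) ^ d) := by linarith
      _ = min |a| |b| * (2 * (M : ℝ) ^ d) := by ring
      _ ≤ min |a| |b| * ((oEdges (ballM v M)).card : ℝ) :=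
          mul_le_mul_of_nonneg_left hEincard (le_of_lt hm)
  have hU4 : 4 * (U : ℝ) < ((oEdges (ballM v M)).card : ℝ) := by
    have h := (mul_lt_mul_iff_right₀ hm).mp (by linarith : min |a| |b| * (4 * (U : ℝ))
      < min |a| |b| * ((oEdges (ballM v M)).card : ℝ))
    linarith
  have hcards : (((oEdges (ballM v M)).filter fun p => 0 < J p * σ p.1 * σ p.2).card)
      + U = (oEdges (ballM v M)).card := by
    rw [hUdef]
    exact Finset.card_filter_add_card_filter_not _
  have hcast : (((oEdges (ballM v M)).filter fun p => 0 < J p * σ p.1 * σ p.2).card : ℝ)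
      = ((oEdges (ballM v M)).card : ℝ) - (U : ℝ) := by
    have := congrArg (Nat.cast (R := ℝ)) hcards
    push_cast at this
    linarith
  rw [hcast]
  linarith
end

section
/- Let e = {x,y} and suppose couplings J satisfy: (1) |J_{vw}| < r whenever v is a neighbor of x with v ≠ x, and w ∉ B(x;1)\{x}; (2) |J_{vw}| > d·3^d·r with a common sign whenever v,w ∈ B(x;1)\{x} are adjacent. Then each of the constrained ground states σ^{±,e} (minimizing H_{Λ,J} subject to σ_x σ_y = ±1) satisfies every edge between vertices of B(x;1)\{x}: J_{vw} σ_v σ_w > 0 for all adjacent v,w ∈ B(x;1)\{x}. -/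
open Finset MeasureTheory

section lemmas
variable {d : ℕ}

lemma adj_symm {u w : Vd d} (h : adj u w) : adj w u := by
  unfold adj at *; rw [← h]; exact Finset.sum_congr rfl fun i _ => abs_sub_comm _ _

lemma adj_ne {u w : Vd d} (h : adj u w) : u ≠ w := by
  rintro rfl; unfold adj at h; simp at h

lemma adj_struct {u w : Vd d} (h : adj u w) :
    ∃ i, (∀ j, j ≠ i → u j = w j) ∧ |u i - w i| = 1 := by
  unfold adj at h
  have hne : ∃ i, |u i - w i| ≠ 0 := by
    by_contra hc
    push_neg at hc
    simp only [hc, Finset.sum_const_zero] at h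
    omega
  obtain ⟨i, hi⟩ := hne
  have hnn : ∀ j ∈ Finset.univ.erase i, (0:ℤ) ≤ |u j - w j| := fun j _ => abs_nonneg _
  rw [← Finset.sum_erase_add _ _ (Finset.mem_univ i)] at h
  have hrest : ∑ j ∈ Finset.univ.erase i, |u j - w j| = 0 := by
    have h0 := abs_nonneg (u i - w i)
    have h1 : (1:ℤ) ≤ |u i - w i| := by omega
    have hsum := Finset.sum_nonneg hnn
    omega
  refine ⟨i, fun j hj => ?_, by
    have h0 := abs_nonneg (u i - w i)
    have hsum := Finset.sum_nonneg hnn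
    omega⟩
  have := (Finset.sum_eq_zero_iff_of_nonneg hnn).1 hrest j (Finset.mem_erase.2 ⟨hj, Finset.mem_univ j⟩)
  have := abs_eq_zero.1 this
  omega

lemma adj_sum_diff {u w : Vd d} (h : adj u w) :
    (∑ i, w i) - (∑ i, u i) = 1 ∨ (∑ i, w i) - (∑ i, u i) = -1 := by
  obtain ⟨i, hj, hi⟩ := adj_struct h
  have : (∑ j, w j) - (∑ j, u j) = ∑ j, (w j - u j) := by rw [Finset.sum_sub_distrib]
  rw [this, Finset.sum_eq_single_of_mem i (Finset.mem_univ i)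
    (fun j _ hji => by rw [hj j hji]; ring)]
  rcases (abs_eq (by norm_num : (0:ℤ) ≤ 1)).1 hi with h' | h' <;> omega

lemma adj_lt_update {u w : Vd d} (h : adj u w) (hlt : (∑ i, u i) < (∑ i, w i)) :
    ∃ i, w = Function.update u i (u i + 1) := by
  obtain ⟨i, hj, hi⟩ := adj_struct h
  have hsum : (∑ j, w j) - (∑ j, u j) = w i - u i := by
    rw [← Finset.sum_sub_distrib, Finset.sum_eq_single_of_mem i (Finset.mem_univ i)
      (fun j _ hji => by rw [hj j hji]; ring)]
  refine ⟨i, funext fun j => ?_⟩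
  rcases eq_or_ne j i with rfl | hne
  · simp only [Function.update_self]
    rcases (abs_eq (by norm_num : (0:ℤ) ≤ 1)).1 hi with h' | h' <;> omega
  · rw [Function.update_of_ne hne]; exact (hj j hne).symm

lemma mem_ballM {v x : Vd d} {M : ℕ} :
    v ∈ ballM x M ↔ ∀ i, x i - M ≤ v i ∧ v i ≤ x i + M := by
  unfold ballM
  rw [Fintype.mem_piFinset]
  simp only [Finset.mem_Icc]

lemma self_mem_ballM (x : Vd d) (M : ℕ) : x ∈ ballM x M := by
  rw [mem_ballM]; intro i; constructor <;> simp

lemma ballM_mono (x : Vd d) : ballM x 1 ⊆ ballM x 2 := by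
  intro v hv
  rw [mem_ballM] at *
  intro i
  have := hv i
  push_cast at *
  omega

lemma adj_mem_ballM {v w x : Vd d} {M : ℕ} (hv : v ∈ ballM x M) (h : adj v w) :
    w ∈ ballM x (M + 1) := by
  obtain ⟨i, hj, hi⟩ := adj_struct h
  rw [mem_ballM] at *
  intro k
  have h1 := hv k
  push_cast
  rcases eq_or_ne k i with rfl | hne
  · rcases abs_eq (by norm_num : (0:ℤ) ≤ 1) |>.1 hi with h' | h' <;> omega
  · rw [hj k hne] at h1; omega

end lemmas

section two
variable {d : ℕ}

noncomputable def pick (u w : Vd d) : Option (Fin d) :=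
  if h : ∃ i, w = Function.update u i (u i + 1) then some h.choose else none

lemma update_inj {u : Vd d} {i i' : Fin d}
    (h : Function.update u i (u i + 1) = Function.update u i' (u i' + 1)) : i = i' := by
  by_contra hne
  have := congrFun h i
  rw [Function.update_self] at this
  rw [Function.update_of_ne hne] at this
  omega

lemma pick_eq {u w : Vd d} {i : Fin d} (h : w = Function.update u i (u i + 1)) :
    pick u w = some i := by
  unfold pick
  have hex : ∃ i, w = Function.update u i (u i + 1) := ⟨i, h⟩
  rw [dif_pos hex]
  exact congrArg some (update_inj (hex.choose_spec.symm.trans h))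

noncomputable def Qset (x : Vd d) (i : Fin d) : Finset (Vd d) :=
  ({x, Function.update x i (x i - 1)} : Finset (Vd d)) ∪
    Fintype.piFinset (fun j => if j = i then ({x i - 2, x i + 1} : Finset ℤ)
      else Finset.Icc (x j - 1) (x j + 1))

lemma card_Qset (hd : 2 ≤ d) (x : Vd d) (i : Fin d) : (Qset x i).card ≤ 3 ^ d := by
  have h1 : ({x, Function.update x i (x i - 1)} : Finset (Vd d)).card ≤ 2 := by
    apply le_trans (Finset.card_insert_le _ _); simp
  have h2 : (Fintype.piFinset (fun j => if j = i then ({x i - 2, x i + 1} : Finset ℤ)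
      else Finset.Icc (x j - 1) (x j + 1))).card ≤ 2 * 3 ^ (d - 1) := by
    rw [Fintype.card_piFinset]
    have : ∀ j : Fin d, ((if j = i then ({x i - 2, x i + 1} : Finset ℤ)
        else Finset.Icc (x j - 1) (x j + 1))).card ≤ if j = i then 2 else 3 := by
      intro j
      rcases eq_or_ne j i with rfl | hne
      · simp only [if_pos rfl]
        apply le_trans (Finset.card_insert_le _ _); simp
      · simp only [if_neg hne]
        rw [Int.card_Icc]
        have : x j + 1 + 1 - (x j - 1) = 3 := by ring
        rw [this]
        simp
    calc ∏ j, ((if j = i then ({x i - 2, x i + 1} : Finset ℤ)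
          else Finset.Icc (x j - 1) (x j + 1))).card
        ≤ ∏ j, (if j = i then 2 else 3) := Finset.prod_le_prod' (fun j _ => this j)
      _ = 2 * 3 ^ (d - 1) := by
          rw [← Finset.mul_prod_erase Finset.univ _ (Finset.mem_univ i)]
          simp only [if_pos rfl]
          congr 1
          rw [Finset.prod_congr rfl (fun j hj => if_neg (Finset.mem_erase.1 hj).1),
            Finset.prod_const, Finset.card_erase_of_mem (Finset.mem_univ i)]
          simp
  have h3 : 2 + 2 * 3 ^ (d - 1) ≤ 3 ^ d := by
    have : 3 ^ d = 3 * 3 ^ (d - 1) := by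
      rw [← pow_succ']
      congr 1
      omega
    have h4 : 2 ≤ 3 ^ (d - 1) := by
      calc 2 ≤ 3 ^ 1 := by norm_num
        _ ≤ 3 ^ (d - 1) := Nat.pow_le_pow_right (by norm_num) (by omega)
    omega
  calc (Qset x i).card ≤ _ := Finset.card_union_le _ _
    _ ≤ 2 + 2 * 3 ^ (d-1) := Nat.add_le_add h1 h2
    _ ≤ 3 ^ d := h3
end two


section count
variable {d : ℕ}

lemma card_bound (hd : 2 ≤ d) (x : Vd d) (W : Finset (Vd d × Vd d))
    (hW : ∀ p ∈ W, adj p.1 p.2 ∧ (∑ i, p.1 i) < (∑ i, p.2 i) ∧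
      (p.1 = x ∨ p.2 = x ∨
        (p.1 ∈ ballM x 1 ∧ p.2 ∉ ballM x 1) ∨ (p.2 ∈ ballM x 1 ∧ p.1 ∉ ballM x 1))) :
    W.card ≤ d * 3 ^ d := by
  classical
  set T : Finset (Option (Fin d) × Vd d) :=
    Finset.univ.biUnion (fun i => ({(some i : Option (Fin d))} : Finset _) ×ˢ Qset x i) with hT
  have hmaps : ∀ p ∈ W, ((pick p.1 p.2, p.1) : Option (Fin d) × Vd d) ∈ T := by
    intro p hp
    obtain ⟨hadj, hlt, hcase⟩ := hW p hp
    obtain ⟨i, hup⟩ := adj_lt_update hadj hlt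
    have hpick := pick_eq hup
    rw [hT, Finset.mem_biUnion]
    refine ⟨i, Finset.mem_univ i, Finset.mem_product.2 ⟨by simp [hpick], ?_⟩⟩
    dsimp only
    have hoff : ∀ j, j ≠ i → p.2 j = p.1 j := by
      intro j hj; rw [hup, Function.update_of_ne hj]
    have hon : p.2 i = p.1 i + 1 := by rw [hup, Function.update_self]
    unfold Qset
    rcases hcase with h | h | ⟨hA1, hA2⟩ | ⟨hB1, hB2⟩
    · exact Finset.mem_union_left _ (by rw [h]; exact Finset.mem_insert_self _ _)
    · refine Finset.mem_union_left _ (Finset.mem_insert.2 (Or.inr (Finset.mem_singleton.2 ?_)))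
      funext j
      rcases eq_or_ne j i with rfl | hj
      · rw [Function.update_self]
        have := hon; rw [h] at this; omega
      · rw [Function.update_of_ne hj]
        have := hoff j hj; rw [h] at this; omega
    · refine Finset.mem_union_right _ (Fintype.mem_piFinset.2 fun j => ?_)
      have hb := mem_ballM.1 hA1
      rcases eq_or_ne j i with rfl | hj
      · rw [if_pos rfl]
        have hb2 : ¬ ∀ k, x k - (1:ℕ) ≤ p.2 k ∧ p.2 k ≤ x k + (1:ℕ) := fun hk => hA2 (mem_ballM.2 hk)
        push_neg at hb2
        obtain ⟨k, hk⟩ := hb2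
        have hkj : k = j := by
          by_contra hkj
          have h1 := hoff k hkj
          have h2 := hb k
          push_cast at h2 hk
          omega
        subst hkj
        have h2 := hb k
        push_cast at h2 hk
        simp only [Finset.mem_insert, Finset.mem_singleton]
        omega
      · rw [if_neg hj]
        have h2 := hb j
        push_cast at h2
        rw [Finset.mem_Icc]
        omega
    · refine Finset.mem_union_right _ (Fintype.mem_piFinset.2 fun j => ?_)
      have hb := mem_ballM.1 hB1
      rcases eq_or_ne j i with rfl | hj
      · rw [if_pos rfl]
        have hb2 : ¬ ∀ k, x k - (1:ℕ) ≤ p.1 k ∧ p.1 k ≤ x k + (1:ℕ) := fun hk => hB2 (mem_ballM.2 hk)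
        push_neg at hb2
        obtain ⟨k, hk⟩ := hb2
        have hkj : k = j := by
          by_contra hkj
          have h1 := hoff k hkj
          have h2 := hb k
          push_cast at h2 hk
          omega
        subst hkj
        have h2 := hb k
        push_cast at h2 hk
        simp only [Finset.mem_insert, Finset.mem_singleton]
        omega
      · rw [if_neg hj]
        have h2 := hb j
        have h1 := hoff j hj
        push_cast at h2
        rw [Finset.mem_Icc]
        omega
  have hinj : Set.InjOn (fun p : Vd d × Vd d => ((pick p.1 p.2, p.1) : Option (Fin d) × Vd d)) W := by
    intro p hp q hq heq
    obtain ⟨hadjp, hltp, _⟩ := hW p hp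
    obtain ⟨hadjq, hltq, _⟩ := hW q hq
    obtain ⟨i, hupi⟩ := adj_lt_update hadjp hltp
    obtain ⟨i', hupi'⟩ := adj_lt_update hadjq hltq
    have h1 : p.1 = q.1 := congrArg Prod.snd heq
    have h2 : pick p.1 p.2 = pick q.1 q.2 := congrArg Prod.fst heq
    rw [pick_eq hupi, pick_eq hupi'] at h2
    have h3 : i = i' := Option.some_injective _ h2
    have h4 : p.2 = q.2 := by rw [hupi, hupi', h1, h3]
    exact Prod.ext h1 h4
  calc W.card ≤ T.card := Finset.card_le_card_of_injOn _ hmaps hinj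
    _ ≤ ∑ i : Fin d, (({(some i : Option (Fin d))} : Finset _) ×ˢ Qset x i).card :=
        Finset.card_biUnion_le
    _ ≤ ∑ _i : Fin d, 3 ^ d := by
        refine Finset.sum_le_sum fun i _ => ?_
        rw [Finset.card_product, Finset.card_singleton, one_mul]
        exact card_Qset hd x i
    _ = d * 3 ^ d := by rw [Finset.sum_const]; simp [mul_comm]
end count

section main
variable {d : ℕ}

lemma cpl_symm' (J : Vd d × Vd d → ℝ) {u v : Vd d} (h : (∑ i, u i) ≠ ∑ i, v i) :
    cpl J u v = cpl J v u := by
  unfold cpl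
  rcases h.lt_or_gt with h' | h'
  · rw [if_pos h', if_neg (not_lt.2 h'.le)]
  · rw [if_neg (not_lt.2 h'.le), if_pos h']

lemma spin_abs {s : Vd d → ℝ} (hs : isSpin s) (v : Vd d) : |s v| = 1 := by
  rcases hs v with h | h <;> rw [h] <;> norm_num

end main

/-- Suppose the couplings leaving the punctured ball `B(x;1) \ {x}` are
weak (`|J| < r`) while the couplings inside `B(x;1) \ {x}` are strong (`|J| > d·3^d·r`)
with a common sign. Then each constrained ground state `σ^{±,e}` (minimizing `H` subject
to `s_x s_y = ±1`) satisfies every edge inside `B(x;1) \ {x}`. -/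
theorem stmt10 {d : ℕ} (Λ : Finset (Vd d)) (J : Vd d × Vd d → ℝ) (r : ℝ)
    (x y : Vd d) (hadj : adj x y) (hball : ballM x 2 ⊆ Λ)
    (h1 : ∀ v ∈ ballM x 1 \ {x}, ∀ w ∉ ballM x 1 \ {x}, adj v w → |cpl J v w| < r)
    (h2 : ∀ v ∈ ballM x 1 \ {x}, ∀ w ∈ ballM x 1 \ {x}, adj v w →
      (d : ℝ) * 3 ^ d * r < |cpl J v w|)
    (hsign : (∀ v ∈ ballM x 1 \ {x}, ∀ w ∈ ballM x 1 \ {x}, adj v w → 0 < cpl J v w) ∨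
      (∀ v ∈ ballM x 1 \ {x}, ∀ w ∈ ballM x 1 \ {x}, adj v w → cpl J v w < 0))
    (c : ℝ) (hc : c = 1 ∨ c = -1)
    (σ : Vd d → ℝ) (hσ : isSpin σ) (he : σ x * σ y = c)
    (hmin : ∀ s, isSpin s → (∀ u, u ∉ Λ → s u = σ u) → s x * s y = c →
      ham Λ J σ ≤ ham Λ J s) :
    ∀ v ∈ ballM x 1 \ {x}, ∀ w ∈ ballM x 1 \ {x}, adj v w →
      0 < cpl J v w * σ v * σ w := by
  classical
  intro v0 hv0 w0 hw0 hadj0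
  by_contra hbad
  push_neg at hbad
  -- basic facts
  have hyB1 : y ∈ ballM x 1 := by
    have := adj_mem_ballM (self_mem_ballM x 0) hadj
    simpa using this
  have hxy : x ≠ y := adj_ne hadj
  have hyB : y ∈ ballM x 1 \ {x} := Finset.mem_sdiff.2 ⟨hyB1, by simp [hxy.symm]⟩
  have hxnB : x ∉ ballM x 1 \ {x} := by simp
  have hr : 0 < r := lt_of_le_of_lt (abs_nonneg _) (h1 y hyB x hxnB (adj_symm hadj))
  have hv0x : v0 ≠ x := by
    have := (Finset.mem_sdiff.1 hv0).2; simpa using this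
  have hw0x : w0 ≠ x := by
    have := (Finset.mem_sdiff.1 hw0).2; simpa using this
  have hv0B1 : v0 ∈ ballM x 1 := (Finset.mem_sdiff.1 hv0).1
  have hw0B1 : w0 ∈ ballM x 1 := (Finset.mem_sdiff.1 hw0).1
  -- dimension at least two
  have hd : 2 ≤ d := by
    by_contra hdlt
    push_neg at hdlt
    obtain ⟨i, hoffs, habs⟩ := adj_struct hadj0
    have hall : ∀ j : Fin d, j = i := fun j => Fin.ext (by have := j.isLt; have := i.isLt; omega)
    have h5 : v0 i ≠ x i := fun hco => hv0x (funext fun j => by rw [hall j]; exact hco)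
    have h6 : w0 i ≠ x i := fun hco => hw0x (funext fun j => by rw [hall j]; exact hco)
    have h7 := (mem_ballM.1 hv0B1) i
    have h8 := (mem_ballM.1 hw0B1) i
    push_cast at h7 h8
    have habs' := (abs_eq (by norm_num : (0:ℤ) ≤ 1)).1 habs
    omega
  have hdr : 0 < (d : ℝ) * 3 ^ d * r := by positivity
  -- the sign ε
  obtain ⟨ε, hε1, hεs⟩ : ∃ ε : ℝ, (ε = 1 ∨ ε = -1) ∧
      ∀ v ∈ ballM x 1 \ {x}, ∀ w ∈ ballM x 1 \ {x}, adj v w →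
        cpl J v w * ε = |cpl J v w| := by
    rcases hsign with hs | hs
    · exact ⟨1, Or.inl rfl, fun v hv w hw h => by
        rw [mul_one, abs_of_pos (hs v hv w hw h)]⟩
    · exact ⟨-1, Or.inr rfl, fun v hv w hw h => by
        rw [abs_of_neg (hs v hv w hw h)]; ring⟩
  have hε2 : ε * ε = 1 := by rcases hε1 with rfl | rfl <;> norm_num
  -- the comparison configuration
  set P : Vd d → ℝ := fun v => if Even ((∑ i, v i) - ∑ i, x i) then 1 else ε with hP
  set η : Vd d → ℝ := fun v => if v = x then c * ε else if v ∈ ballM x 1 then P v else σ v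
    with hη
  have hPval : ∀ v, P v = 1 ∨ P v = -1 := by
    intro v
    rw [hP]
    by_cases h : Even ((∑ i, v i) - ∑ i, x i)
    · simp [h]
    · simpa [h] using hε1
  have hηspin : isSpin η := by
    intro v
    rw [hη]
    by_cases h : v = x
    · rcases hc with rfl | rfl <;> rcases hε1 with rfl | rfl <;> simp [h]
    · by_cases h' : v ∈ ballM x 1 <;> simp only [h, h', if_true, if_false, ite_true, ite_false]
      · exact hPval v
      · exact hσ v
  have hPadj : ∀ v w, adj v w → P v * P w = ε := by
    intro v w h
    have hodd : Odd ((∑ i, w i) - ∑ i, v i) := by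
      rcases adj_sum_diff h with h' | h' <;> rw [h']
      · exact ⟨0, by ring⟩
      · exact ⟨-1, by ring⟩
    by_cases hv : Even ((∑ i, v i) - ∑ i, x i)
    · have hw : ¬ Even ((∑ i, w i) - ∑ i, x i) := by
        intro hw
        have h3 : Even (((∑ i, w i) - ∑ i, x i) - ((∑ i, v i) - ∑ i, x i)) := hw.sub hv
        rw [show ((∑ i, w i) - ∑ i, x i) - ((∑ i, v i) - ∑ i, x i)
          = (∑ i, w i) - ∑ i, v i by ring] at h3
        exact (Int.not_odd_iff_even.mpr h3) hodd
      rw [hP]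
      simp [hv, hw]
    · have hw : Even ((∑ i, w i) - ∑ i, x i) := by
        by_contra hw
        have hov := Int.not_even_iff_odd.1 hv
        have how := Int.not_even_iff_odd.1 hw
        have h3 := how.sub_odd hov
        rw [show ((∑ i, w i) - ∑ i, x i) - ((∑ i, v i) - ∑ i, x i)
          = (∑ i, w i) - ∑ i, v i by ring] at h3
        exact (Int.not_odd_iff_even.mpr h3) hodd
      rw [hP]
      simp [hv, hw]
  -- η is admissible
  have houtside : ∀ u, u ∉ Λ → η u = σ u := by
    intro u hu
    have hu1 : u ∉ ballM x 1 := fun h => hu (hball (ballM_mono x h))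
    have hux : u ≠ x := fun h => hu1 (h ▸ self_mem_ballM x 1)
    show (if u = x then c * ε else if u ∈ ballM x 1 then P u else σ u) = σ u
    rw [if_neg hux, if_neg hu1]
  have hηxy : η x * η y = c := by
    have hx : η x = c * ε := by rw [hη]; simp
    have hy : η y = ε := by
      have hodd : ¬ Even ((∑ i, y i) - ∑ i, x i) := by
        rcases adj_sum_diff hadj with h' | h' <;> rw [h'] <;> rintro ⟨k, hk⟩ <;> omega
      show (if y = x then c * ε else if y ∈ ballM x 1 then P y else σ y) = ε
      rw [if_neg hxy.symm, if_pos hyB1]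
      show (if Even ((∑ i, y i) - ∑ i, x i) then (1:ℝ) else ε) = ε
      rw [if_neg hodd]
    rw [hx, hy, mul_assoc, hε2, mul_one]
  have hH := hmin η hηspin houtside hηxy
  unfold ham at hH
  set F := oEdges (reg Λ) with hF
  set g : Vd d × Vd d → ℝ := fun p => J p * η p.1 * η p.2 - J p * σ p.1 * σ p.2 with hg
  have hsum0 : ∑ p ∈ F, g p ≤ 0 := by
    rw [hg, Finset.sum_sub_distrib]
    linarith
  -- facts about edges
  have hFmem : ∀ p ∈ F, p.1 ∈ reg Λ ∧ p.2 ∈ reg Λ ∧ adj p.1 p.2 ∧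
      (∑ i, p.1 i) < (∑ i, p.2 i) := by
    intro p hp
    rw [hF] at hp
    unfold oEdges at hp
    rw [Finset.mem_filter, Finset.mem_product] at hp
    exact ⟨hp.1.1, hp.1.2, hp.2.1, hp.2.2⟩
  have hJcpl : ∀ p ∈ F, J p = cpl J p.1 p.2 := by
    intro p hp
    obtain ⟨-, -, -, hlt⟩ := hFmem p hp
    unfold cpl
    rw [if_pos hlt]
  have hBreg : ∀ v ∈ ballM x 1, v ∈ reg Λ :=
    fun v hv => Finset.mem_union_left _ (hball (ballM_mono x hv))
  -- restrict the sum to edges touching the ball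
  set T := F.filter (fun p => p.1 ∈ ballM x 1 ∨ p.2 ∈ ballM x 1) with hTdef
  have hsumT : ∑ p ∈ T, g p = ∑ p ∈ F, g p := by
    apply Finset.sum_filter_of_ne
    intro p hp hne
    by_contra hto
    push_neg at hto
    have h1x : p.1 ≠ x := fun h => hto.1 (h ▸ self_mem_ballM x 1)
    have h2x : p.2 ≠ x := fun h => hto.2 (h ▸ self_mem_ballM x 1)
    apply hne
    rw [hg]
    simp only [hη, h1x, h2x, hto.1, hto.2, if_false, ite_false]
    ring
  set strong : Vd d × Vd d → Prop :=
    fun p => p.1 ∈ ballM x 1 \ {x} ∧ p.2 ∈ ballM x 1 \ {x} with hstrong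
  set Sg := T.filter strong with hSg
  set Wk := T.filter (fun p => ¬ strong p) with hWk
  have hsplit : ∑ p ∈ Sg, g p + ∑ p ∈ Wk, g p = ∑ p ∈ T, g p :=
    Finset.sum_filter_add_sum_filter_not T strong g
  -- evaluating η on the punctured ball
  have hηB : ∀ v ∈ ballM x 1 \ {x}, η v = P v := by
    intro v hv
    rw [Finset.mem_sdiff] at hv
    have : v ≠ x := by simpa using hv.2
    rw [hη]
    simp [this, hv.1]
  -- the strong sum
  have hgstrong : ∀ p ∈ Sg, g p = |cpl J p.1 p.2| - cpl J p.1 p.2 * (σ p.1 * σ p.2) := by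
    intro p hp
    rw [hSg, Finset.mem_filter] at hp
    obtain ⟨hpT, hps⟩ := hp
    rw [hTdef, Finset.mem_filter] at hpT
    obtain ⟨hpF, -⟩ := hpT
    obtain ⟨-, -, hpadj, -⟩ := hFmem p hpF
    show J p * η p.1 * η p.2 - J p * σ p.1 * σ p.2
      = |cpl J p.1 p.2| - cpl J p.1 p.2 * (σ p.1 * σ p.2)
    rw [hηB p.1 hps.1, hηB p.2 hps.2, hJcpl p hpF]
    rw [mul_assoc, hPadj _ _ hpadj, mul_assoc,
      hεs p.1 hps.1 p.2 hps.2 hpadj]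
  have hgnonneg : ∀ p ∈ Sg, 0 ≤ g p := by
    intro p hp
    rw [hgstrong p hp]
    have h3 : |cpl J p.1 p.2 * (σ p.1 * σ p.2)| = |cpl J p.1 p.2| := by
      rw [abs_mul, abs_mul, spin_abs hσ, spin_abs hσ]
      ring
    nlinarith [le_abs_self (cpl J p.1 p.2 * (σ p.1 * σ p.2)), abs_nonneg (cpl J p.1 p.2)]
  -- the bad edge
  obtain ⟨p0, hp01, hp02, hp0adj, hp0lt, hp0cpl, hp0σ⟩ :
      ∃ p0 : Vd d × Vd d, p0.1 ∈ ballM x 1 \ {x} ∧ p0.2 ∈ ballM x 1 \ {x} ∧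
        adj p0.1 p0.2 ∧ (∑ i, p0.1 i) < (∑ i, p0.2 i) ∧
        cpl J p0.1 p0.2 = cpl J v0 w0 ∧ σ p0.1 * σ p0.2 = σ v0 * σ w0 := by
    rcases adj_sum_diff hadj0 with h' | h'
    · exact ⟨(v0, w0), hv0, hw0, hadj0,
        show (∑ i, v0 i) < ∑ i, w0 i by omega, rfl, rfl⟩
    · refine ⟨(w0, v0), hw0, hv0, adj_symm hadj0,
        show (∑ i, w0 i) < ∑ i, v0 i by omega, ?_, mul_comm _ _⟩
      exact cpl_symm' J (show (∑ i, w0 i) ≠ ∑ i, v0 i by omega)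
  have hp0F : p0 ∈ F := by
    rw [hF]
    unfold oEdges
    rw [Finset.mem_filter, Finset.mem_product]
    exact ⟨⟨hBreg _ (Finset.mem_sdiff.1 hp01).1, hBreg _ (Finset.mem_sdiff.1 hp02).1⟩,
      hp0adj, hp0lt⟩
  have hp0Sg : p0 ∈ Sg := by
    rw [hSg, Finset.mem_filter, hTdef, Finset.mem_filter]
    exact ⟨⟨hp0F, Or.inl (Finset.mem_sdiff.1 hp01).1⟩, hp01, hp02⟩
  set K := cpl J v0 w0 with hK
  have hKabs : (d : ℝ) * 3 ^ d * r < |K| := h2 v0 hv0 w0 hw0 hadj0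
  have hKσ : K * (σ v0 * σ w0) = -|K| := by
    have hbad' : K * (σ v0 * σ w0) ≤ 0 := by rw [← mul_assoc]; exact hbad
    have habs : |K * (σ v0 * σ w0)| = |K| := by
      rw [abs_mul, abs_mul, spin_abs hσ, spin_abs hσ]; ring
    have hKne : K ≠ 0 := by
      intro h
      rw [h, abs_zero] at hKabs
      linarith
    have : K * (σ v0 * σ w0) ≠ 0 := fun h => by
      rw [h, abs_zero] at habs
      exact hKne (abs_eq_zero.1 habs.symm)
    rcases lt_or_eq_of_le hbad' with h' | h'
    · rw [← habs, abs_of_neg h']; ring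
    · exact (this h').elim
  have hgp0 : g p0 = 2 * |K| := by
    rw [hgstrong p0 hp0Sg, hp0cpl, hp0σ, hKσ]
    ring
  have hSgsum : 2 * |K| ≤ ∑ p ∈ Sg, g p := by
    rw [← hgp0]
    exact Finset.single_le_sum hgnonneg hp0Sg
  -- the weak sum
  have hWkfact : ∀ p ∈ Wk, |J p| < r ∧ (p.1 = x ∨ p.2 = x ∨
      (p.1 ∈ ballM x 1 ∧ p.2 ∉ ballM x 1) ∨ (p.2 ∈ ballM x 1 ∧ p.1 ∉ ballM x 1)) := by
    intro p hp
    rw [hWk, Finset.mem_filter] at hp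
    obtain ⟨hpT, hps⟩ := hp
    rw [hTdef, Finset.mem_filter] at hpT
    obtain ⟨hpF, htouch⟩ := hpT
    obtain ⟨-, -, hpadj, hplt⟩ := hFmem p hpF
    rw [hJcpl p hpF]
    by_cases h1x : p.1 = x
    · have h2B : p.2 ∈ ballM x 1 \ {x} := by
        have : adj x p.2 := h1x ▸ hpadj
        refine Finset.mem_sdiff.2 ⟨by simpa using adj_mem_ballM (self_mem_ballM x 0) this, ?_⟩
        simpa using (adj_ne this).symm
      have hweak := h1 p.2 h2B x hxnB (adj_symm (h1x ▸ hpadj))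
      constructor
      · have heq : cpl J p.1 p.2 = cpl J p.2 x := by
          rw [cpl_symm' J (show (∑ i, p.1 i) ≠ ∑ i, p.2 i by omega), h1x]
        rw [heq]
        exact hweak
      · exact Or.inl h1x
    · by_cases h2x : p.2 = x
      · have h1B : p.1 ∈ ballM x 1 \ {x} := by
          have : adj x p.1 := adj_symm (h2x ▸ hpadj)
          refine Finset.mem_sdiff.2 ⟨by simpa using adj_mem_ballM (self_mem_ballM x 0) this, ?_⟩
          simpa using (adj_ne this).symm
        have hweak := h1 p.1 h1B x hxnB (h2x ▸ hpadj)
        constructor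
        · rw [h2x]
          exact hweak
        · exact Or.inr (Or.inl h2x)
      · rcases htouch with hA | hA
        · have h1B : p.1 ∈ ballM x 1 \ {x} := Finset.mem_sdiff.2 ⟨hA, by simpa using h1x⟩
          have h2nB : p.2 ∉ ballM x 1 \ {x} := by
            intro hco
            exact hps ⟨h1B, hco⟩
          have h2nB1 : p.2 ∉ ballM x 1 := by
            intro hco
            exact h2nB (Finset.mem_sdiff.2 ⟨hco, by simpa using h2x⟩)
          exact ⟨h1 p.1 h1B p.2 h2nB hpadj, Or.inr (Or.inr (Or.inl ⟨hA, h2nB1⟩))⟩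
        · have h2B : p.2 ∈ ballM x 1 \ {x} := Finset.mem_sdiff.2 ⟨hA, by simpa using h2x⟩
          have h1nB : p.1 ∉ ballM x 1 \ {x} := by
            intro hco
            exact hps ⟨hco, h2B⟩
          have h1nB1 : p.1 ∉ ballM x 1 := by
            intro hco
            exact h1nB (Finset.mem_sdiff.2 ⟨hco, by simpa using h1x⟩)
          refine ⟨?_, Or.inr (Or.inr (Or.inr ⟨hA, h1nB1⟩))⟩
          rw [cpl_symm' J (show (∑ i, p.1 i) ≠ ∑ i, p.2 i by omega)]
          exact h1 p.2 h2B p.1 h1nB (adj_symm hpadj)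
  have hWkcard : Wk.card ≤ d * 3 ^ d := by
    apply card_bound hd x
    intro p hp
    have hf := (hWkfact p hp).2
    rw [hWk, Finset.mem_filter, hTdef, Finset.mem_filter] at hp
    obtain ⟨⟨hpF, -⟩, -⟩ := hp
    obtain ⟨-, -, hpadj, hplt⟩ := hFmem p hpF
    exact ⟨hpadj, hplt, hf⟩
  have hgweak : ∀ p ∈ Wk, -(2 * r) ≤ g p := by
    intro p hp
    have hJ := (hWkfact p hp).1
    have hη1 : |η p.1| = 1 := spin_abs hηspin p.1
    have hη2 : |η p.2| = 1 := spin_abs hηspin p.2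
    have hσ1 : |σ p.1| = 1 := spin_abs hσ p.1
    have hσ2 : |σ p.2| = 1 := spin_abs hσ p.2
    have hb1 : |J p * η p.1 * η p.2| = |J p| := by rw [abs_mul, abs_mul, hη1, hη2]; ring
    have hb2 : |J p * σ p.1 * σ p.2| = |J p| := by rw [abs_mul, abs_mul, hσ1, hσ2]; ring
    rw [hg]
    have c1 : -(|J p|) ≤ J p * η p.1 * η p.2 := by rw [← hb1]; exact neg_abs_le _
    have c2 : J p * σ p.1 * σ p.2 ≤ |J p| := by rw [← hb2]; exact le_abs_self _
    simp only []
    linarith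
  have hWksum : -(2 * r * ((d : ℝ) * 3 ^ d)) ≤ ∑ p ∈ Wk, g p := by
    calc -(2 * r * ((d : ℝ) * 3 ^ d)) ≤ -(2 * r * (Wk.card : ℝ)) := by
          have hcard : (Wk.card : ℝ) ≤ (d : ℝ) * 3 ^ d := by
            calc (Wk.card : ℝ) ≤ ((d * 3 ^ d : ℕ) : ℝ) := Nat.cast_le.2 hWkcard
              _ = (d : ℝ) * 3 ^ d := by push_cast; ring
          nlinarith
      _ = ∑ _p ∈ Wk, -(2 * r) := by rw [Finset.sum_const, nsmul_eq_mul]; ring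
      _ ≤ ∑ p ∈ Wk, g p := Finset.sum_le_sum hgweak
  -- contradiction
  have hfinal : 0 < ∑ p ∈ F, g p := by
    rw [← hsumT, ← hsplit]
    have : 2 * ((d : ℝ) * 3 ^ d * r) < 2 * |K| := by linarith
    linarith
  linarith
end

section
/- Away from the critical set C (where two distinct spin configurations have equal energy), the flexibility F_e(J) is differentiable in each coupling coordinate J_b, with ∂F_e/∂J_b = 2σ_b(J) if b is a boundary edge of the critical droplet D_e(J), and ∂F_e/∂J_b = 0 otherwise. -/
open Finset MeasureTheory

/-- The spin configuration on `ℤ^d` determined by `c : Λ → Bool` inside `Λ` and by the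
boundary condition `η` outside `Λ`. -/
def cfg {d : ℕ} (Λ : Finset (Vd d)) (η : Vd d → ℝ) (c : {v // v ∈ Λ} → Bool) :
    Vd d → ℝ :=
  fun v => if h : v ∈ Λ then (if c ⟨v, h⟩ then 1 else -1) else η v

/-- The flexibility of the edge `e = {x,y}`:
`F_e(J) = |min_{s : s_x s_y = 1} H_{Λ,J}(s) − min_{s : s_x s_y = -1} H_{Λ,J}(s)|`. -/
noncomputable def flex {d : ℕ} (Λ : Finset (Vd d)) (η : Vd d → ℝ) (x y : Vd d)
    (J : Vd d × Vd d → ℝ) : ℝ :=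
  |sInf ((fun c => ham Λ J (cfg Λ η c)) '' {c | cfg Λ η c x * cfg Λ η c y = 1}) -
    sInf ((fun c => ham Λ J (cfg Λ η c)) '' {c | cfg Λ η c x * cfg Λ η c y = -1})|

/-- Away from the critical set (generic couplings `J₀`), the flexibility
of `e = {x,y}` is differentiable in each coupling coordinate `J_b`, with derivative
`2 σ_b(J₀)` if `b` belongs to the edge boundary of the critical droplet `D_e`, and `0`
otherwise. Here `σ^{+,e} = σp` is the ground state and `D_e = {v : σp v ≠ σm v}`. -/
theorem stmt18 {d : ℕ} (Λ : Finset (Vd d)) (η : Vd d → ℝ) (hη : isSpin η)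
    (x y : Vd d) (hx : x ∈ Λ) (hy : y ∈ Λ) (hadj : adj x y)
    (J₀ : Vd d × Vd d → ℝ)
    (σp σm : Vd d → ℝ) (hσp : isSpin σp) (hσm : isSpin σm)
    (hbp : ∀ v, v ∉ Λ → σp v = η v) (hbm : ∀ v, v ∉ Λ → σm v = η v)
    (hpe : σp x * σp y = 1) (hme : σm x * σm y = -1)
    (hminp : ∀ s, isSpin s → (∀ v, v ∉ Λ → s v = η v) → s x * s y = 1 →
      ham Λ J₀ σp ≤ ham Λ J₀ s)
    (hminm : ∀ s, isSpin s → (∀ v, v ∉ Λ → s v = η v) → s x * s y = -1 →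
      ham Λ J₀ σm ≤ ham Λ J₀ s)
    (hgs : ham Λ J₀ σp ≤ ham Λ J₀ σm)
    (hgen : ∀ s s', isSpin s → isSpin s' → (∀ v, v ∉ Λ → s v = η v) →
      (∀ v, v ∉ Λ → s' v = η v) → (∃ v ∈ Λ, s v ≠ s' v) →
      ham Λ J₀ s ≠ ham Λ J₀ s') :
    ∀ b ∈ oEdges (reg Λ),
      HasDerivAt (fun h : ℝ => flex Λ η x y (Function.update J₀ b h))
        (if (b.1 ∈ Λ.filter (fun v => σp v ≠ σm v) ∧
              b.2 ∉ Λ.filter (fun v => σp v ≠ σm v)) ∨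
            (b.2 ∈ Λ.filter (fun v => σp v ≠ σm v) ∧
              b.1 ∉ Λ.filter (fun v => σp v ≠ σm v))
          then 2 * (σp b.1 * σp b.2) else 0)
        (J₀ b) := by

  classical
  intro b hb
  -- Key: ham with updated coupling is affine in the coupling
  have keyham : ∀ (s : Vd d → ℝ) (h : ℝ),
      ham Λ (Function.update J₀ b h) s = ham Λ J₀ s - (h - J₀ b) * (s b.1 * s b.2) := by
    intro s h
    unfold ham
    have h1 : ∀ p ∈ oEdges (reg Λ), Function.update J₀ b h p * s p.1 * s p.2
        = Function.update (fun q => J₀ q * s q.1 * s q.2) b (h * (s b.1 * s b.2)) p := by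
      intro p _
      by_cases hp : p = b
      · subst hp; simp; ring
      · simp [Function.update_of_ne hp]
    have h2 : ∀ p ∈ oEdges (reg Λ), J₀ p * s p.1 * s p.2
        = Function.update (fun q => J₀ q * s q.1 * s q.2) b (J₀ b * (s b.1 * s b.2)) p := by
      intro p _
      by_cases hp : p = b
      · subst hp; simp; ring
      · simp [Function.update_of_ne hp]
    rw [Finset.sum_congr rfl h1, Finset.sum_congr rfl h2,
      Finset.sum_update_of_mem hb, Finset.sum_update_of_mem hb]
    ring
  have hxy : x ≠ y := by
    intro hxyeq
    subst hxyeq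
    unfold adj at hadj
    have : σp x * σp x = 1 := hpe
    have := hme
    nlinarith [hpe, hme]
  -- cfg produces spin configs with boundary condition η
  have hcfgspin : ∀ c, isSpin (cfg Λ η c) := by
    intro c v
    unfold cfg
    by_cases hv : v ∈ Λ
    · simp only [hv, dif_pos]
      by_cases hc : c ⟨v, hv⟩ <;> simp [hc]
    · simp only [hv, dif_neg, not_false_iff]
      exact hη v
  have hcfgbd : ∀ c v, v ∉ Λ → cfg Λ η c v = η v := by
    intro c v hv; simp [cfg, hv]
  -- configurations representing σp and σm
  have mkcfg : ∀ σ : Vd d → ℝ, isSpin σ → (∀ v, v ∉ Λ → σ v = η v) →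
      ∃ c, cfg Λ η c = σ := by
    intro σ hσ hbσ
    refine ⟨fun v => σ v.1 = 1, funext fun v => ?_⟩
    unfold cfg
    by_cases hv : v ∈ Λ
    · simp only [hv, dif_pos]
      by_cases he : σ v = 1
      · simp [he]
      · have h1 : σ v = -1 := (hσ v).resolve_left he
        simp [he, h1]
        intro hcon
        norm_num at hcon
    · simp [hv, hbσ v hv]
  obtain ⟨cp, hcp⟩ := mkcfg σp hσp hbp
  obtain ⟨cm, hcm⟩ := mkcfg σm hσm hbm
  -- strictness: σp and σm differ inside Λ
  have hdiff : ∃ v ∈ Λ, σp v ≠ σm v := by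
    by_contra hcon
    push_neg at hcon
    have h1 : σp x = σm x := hcon x hx
    have h2 : σp y = σm y := hcon y hy
    rw [h1, h2, hme] at hpe
    norm_num at hpe
  have hstrict : ham Λ J₀ σp < ham Λ J₀ σm :=
    lt_of_le_of_ne hgs (hgen σp σm hσp hσm hbp hbm hdiff)
  -- helper: continuity of h ↦ ham (update J₀ b h) s
  have hamcont : ∀ s : Vd d → ℝ, Continuous (fun h : ℝ => ham Λ (Function.update J₀ b h) s) := by
    intro s
    have : (fun h : ℝ => ham Λ (Function.update J₀ b h) s)
        = fun h : ℝ => ham Λ J₀ s - (h - J₀ b) * (s b.1 * s b.2) := funext fun h => keyham s h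
    rw [this]
    fun_prop
  have hamat : ∀ s : Vd d → ℝ, ham Λ (Function.update J₀ b (J₀ b)) s = ham Λ J₀ s := by
    intro s; rw [keyham]; ring
  -- eventual inequality lemma
  have key : ∀ σ s : Vd d → ℝ, (σ = s ∨ ham Λ J₀ σ < ham Λ J₀ s) →
      ∀ᶠ h in nhds (J₀ b),
        ham Λ (Function.update J₀ b h) σ ≤ ham Λ (Function.update J₀ b h) s := by
    intro σ s hcase
    rcases hcase with rfl | hlt
    · exact Filter.Eventually.of_forall fun h => le_rfl
    · have hev := ContinuousAt.eventually_lt ((hamcont σ).continuousAt)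
        ((hamcont s).continuousAt) (by rw [hamat σ, hamat s]; exact hlt)
      exact hev.mono fun h hh => le_of_lt hh
  -- σp/σm stay minimizers for all competitors, eventually
  have hall : ∀ᶠ h in nhds (J₀ b), ∀ c : {v // v ∈ Λ} → Bool,
      (cfg Λ η c x * cfg Λ η c y = 1 →
        ham Λ (Function.update J₀ b h) σp ≤ ham Λ (Function.update J₀ b h) (cfg Λ η c)) ∧
      (cfg Λ η c x * cfg Λ η c y = -1 →
        ham Λ (Function.update J₀ b h) σm ≤ ham Λ (Function.update J₀ b h) (cfg Λ η c)) := by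
    rw [Filter.eventually_all]
    intro c
    have step : ∀ σ : Vd d → ℝ, isSpin σ → (∀ v, v ∉ Λ → σ v = η v) →
        ham Λ J₀ σ ≤ ham Λ J₀ (cfg Λ η c) →
        ∀ᶠ h in nhds (J₀ b),
          ham Λ (Function.update J₀ b h) σ ≤ ham Λ (Function.update J₀ b h) (cfg Λ η c) := by
      intro σ hσ hbσ hle
      apply key
      by_cases heq : ∀ v ∈ Λ, σ v = cfg Λ η c v
      · left
        funext v
        by_cases hv : v ∈ Λ
        · exact heq v hv
        · rw [hbσ v hv, hcfgbd c v hv]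
      · right
        push_neg at heq
        obtain ⟨v, hv, hne⟩ := heq
        exact lt_of_le_of_ne hle (hgen σ (cfg Λ η c) hσ (hcfgspin c) hbσ (hcfgbd c) ⟨v, hv, hne⟩)
    have e1 : ∀ᶠ h in nhds (J₀ b), (cfg Λ η c x * cfg Λ η c y = 1 →
        ham Λ (Function.update J₀ b h) σp ≤ ham Λ (Function.update J₀ b h) (cfg Λ η c)) := by
      by_cases hc1 : cfg Λ η c x * cfg Λ η c y = 1
      · exact (step σp hσp hbp (hminp _ (hcfgspin c) (hcfgbd c) hc1)).mono fun h hh _ => hh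
      · exact Filter.Eventually.of_forall fun h hc => absurd hc hc1
    have e2 : ∀ᶠ h in nhds (J₀ b), (cfg Λ η c x * cfg Λ η c y = -1 →
        ham Λ (Function.update J₀ b h) σm ≤ ham Λ (Function.update J₀ b h) (cfg Λ η c)) := by
      by_cases hc1 : cfg Λ η c x * cfg Λ η c y = -1
      · exact (step σm hσm hbm (hminm _ (hcfgspin c) (hcfgbd c) hc1)).mono fun h hh _ => hh
      · exact Filter.Eventually.of_forall fun h hc => absurd hc hc1
    exact e1.and e2
  have hpm : ∀ᶠ h in nhds (J₀ b),
      ham Λ (Function.update J₀ b h) σp < ham Λ (Function.update J₀ b h) σm :=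
    ContinuousAt.eventually_lt ((hamcont σp).continuousAt) ((hamcont σm).continuousAt)
      (by rw [hamat σp, hamat σm]; exact hstrict)
  set K : ℝ := σp b.1 * σp b.2 - σm b.1 * σm b.2 with hKdef
  set C : ℝ := ham Λ J₀ σm - ham Λ J₀ σp with hCdef
  have hev : ∀ᶠ h in nhds (J₀ b),
      flex Λ η x y (Function.update J₀ b h) = C + (h - J₀ b) * K := by
    filter_upwards [hall, hpm] with h hh hlt
    set J := Function.update J₀ b h with hJ
    have hinfp : sInf ((fun c => ham Λ J (cfg Λ η c)) ''
        {c | cfg Λ η c x * cfg Λ η c y = 1}) = ham Λ J σp := by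
      have hmem : ham Λ J σp ∈ (fun c => ham Λ J (cfg Λ η c)) ''
          {c | cfg Λ η c x * cfg Λ η c y = 1} := by
        refine ⟨cp, ?_, by simp only [hcp]⟩
        simp only [Set.mem_setOf_eq, hcp]
        exact hpe
      have hfin : ((fun c => ham Λ J (cfg Λ η c)) ''
          {c | cfg Λ η c x * cfg Λ η c y = 1}).Finite := (Set.toFinite _).image _
      refine le_antisymm (csInf_le hfin.bddBelow hmem) (le_csInf ⟨_, hmem⟩ ?_)
      rintro a ⟨c, hcmem, rfl⟩
      exact (hh c).1 hcmem
    have hinfm : sInf ((fun c => ham Λ J (cfg Λ η c)) ''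
        {c | cfg Λ η c x * cfg Λ η c y = -1}) = ham Λ J σm := by
      have hmem : ham Λ J σm ∈ (fun c => ham Λ J (cfg Λ η c)) ''
          {c | cfg Λ η c x * cfg Λ η c y = -1} := by
        refine ⟨cm, ?_, by simp only [hcm]⟩
        simp only [Set.mem_setOf_eq, hcm]
        exact hme
      have hfin : ((fun c => ham Λ J (cfg Λ η c)) ''
          {c | cfg Λ η c x * cfg Λ η c y = -1}).Finite := (Set.toFinite _).image _
      refine le_antisymm (csInf_le hfin.bddBelow hmem) (le_csInf ⟨_, hmem⟩ ?_)
      rintro a ⟨c, hcmem, rfl⟩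
      exact (hh c).2 hcmem
    unfold flex
    rw [hinfp, hinfm, abs_of_nonpos (by linarith), keyham σp h, keyham σm h]
    simp only [hKdef, hCdef]
    ring
  have haff : HasDerivAt (fun h : ℝ => C + (h - J₀ b) * K) K (J₀ b) := by
    have h1 := (((hasDerivAt_id (J₀ b)).sub_const (J₀ b)).mul_const K).const_add C
    simpa using h1
  have hK : (if (b.1 ∈ Λ.filter (fun v => σp v ≠ σm v) ∧
              b.2 ∉ Λ.filter (fun v => σp v ≠ σm v)) ∨
            (b.2 ∈ Λ.filter (fun v => σp v ≠ σm v) ∧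
              b.1 ∉ Λ.filter (fun v => σp v ≠ σm v))
          then 2 * (σp b.1 * σp b.2) else 0) = K := by
    have hflip : ∀ v, v ∈ Λ.filter (fun v => σp v ≠ σm v) → σm v = -σp v := by
      intro v hv
      rw [Finset.mem_filter] at hv
      rcases hσp v with h1 | h1 <;> rcases hσm v with h2 | h2 <;>
        simp [h1, h2] at hv ⊢
    have hsame : ∀ v, v ∉ Λ.filter (fun v => σp v ≠ σm v) → σm v = σp v := by
      intro v hv
      rw [Finset.mem_filter] at hv
      push_neg at hv
      by_cases hvΛ : v ∈ Λ
      · exact (hv hvΛ).symm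
      · rw [hbm v hvΛ, hbp v hvΛ]
    by_cases h1 : b.1 ∈ Λ.filter (fun v => σp v ≠ σm v) <;>
      by_cases h2 : b.2 ∈ Λ.filter (fun v => σp v ≠ σm v)
    · rw [if_neg (by tauto)]
      rw [hKdef, hflip _ h1, hflip _ h2]; ring
    · rw [if_pos (by tauto)]
      rw [hKdef, hflip _ h1, hsame _ h2]; ring
    · rw [if_pos (by tauto)]
      rw [hKdef, hflip _ h2, hsame _ h1]; ring
    · rw [if_neg (by tauto)]
      rw [hKdef, hsame _ h1, hsame _ h2]; ring
  rw [hK]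
  exact haff.congr_of_eventuallyEq hev
end
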